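/- Let T be an isometry of a non-degenerate symmetric or alternating bilinear form B on a finite-dimensional vector space V over an algebraically closed field F of characteristic 0. Then for λ ≠ 0, the pairing V_λ × V_{λ^{-1}} → F induced by B is non-degenerate; in particular dim V_λ = dim V_{λ^{-1}}. -/

import Mathlib

open Module

/-- Orthogonality of generalized eigenspaces whose eigenvalues do not multiply to 1. -/
lemma aux_orth {F V : Type*} [Field F] [AddCommGroup V] [Module F V]
    (B : LinearMap.BilinForm F V) (T : V →ₗ[F] V) (hT : ∀ v w, B (T v) (T w) = B v w)
    (lam mu : F) (h : lam * mu ≠ 1) :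
    ∀ k m n, m + n ≤ k → ∀ v w, ((T - lam • (1 : Module.End F V)) ^ m) v = 0 →
      ((T - mu • (1 : Module.End F V)) ^ n) w = 0 → B v w = 0 := by
  intro k
  induction k with
  | zero =>
    intro m n hmn v w hv hw
    obtain ⟨rfl, rfl⟩ : m = 0 ∧ n = 0 := by omega
    simp only [pow_zero, Module.End.one_apply] at hv
    simp [hv]
  | succ k ih =>
    intro m n hmn v w hv hw
    rcases Nat.eq_zero_or_eq_succ_pred m with rfl | hm
    · simp only [pow_zero, Module.End.one_apply] at hv
      simp [hv]
    rcases Nat.eq_zero_or_eq_succ_pred n with rfl | hn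
    · simp only [pow_zero, Module.End.one_apply] at hw
      simp [hw]
    set m' := m - 1 with hm'
    set n' := n - 1 with hn'
    set v' := (T - lam • (1 : Module.End F V)) v with hv'
    set w' := (T - mu • (1 : Module.End F V)) w with hw'
    have hv1 : ((T - lam • (1 : Module.End F V)) ^ m') v' = 0 := by
      rw [hv', ← Module.End.mul_apply, ← pow_succ]
      have e : m' + 1 = m := by omega
      rw [e]; exact hv
    have hw1 : ((T - mu • (1 : Module.End F V)) ^ n') w' = 0 := by
      rw [hw', ← Module.End.mul_apply, ← pow_succ]
      have e : n' + 1 = n := by omega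
      rw [e]; exact hw
    have hTv : T v = v' + lam • v := by
      rw [hv']; simp [sub_smul]
    have hTw : T w = w' + mu • w := by
      rw [hw']; simp [sub_smul]
    have e1 : B v' w = 0 := ih m' n (by omega) v' w hv1 hw
    have e2 : B v w' = 0 := ih m n' (by omega) v w' hv hw1
    have e3 : B v' w' = 0 := ih m' n' (by omega) v' w' hv1 hw1
    have key : B v w = B (T v) (T w) := (hT v w).symm
    rw [hTv, hTw] at key
    simp only [map_add, map_smul, LinearMap.add_apply, LinearMap.smul_apply,
      smul_eq_mul, e1, e2, e3] at key
    have hkey : (1 - lam * mu) * B v w = 0 := by linear_combination key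
    rcases mul_eq_zero.mp hkey with h1 | h1
    · exact absurd (sub_eq_zero.mp h1).symm h
    · exact h1

lemma aux_orth' {F V : Type*} [Field F] [AddCommGroup V] [Module F V]
    (B : LinearMap.BilinForm F V) (T : V →ₗ[F] V) (hT : ∀ v w, B (T v) (T w) = B v w)
    (lam mu : F) (h : lam * mu ≠ 1) (v w : V)
    (hv : v ∈ Module.End.maxGenEigenspace T lam)
    (hw : w ∈ Module.End.maxGenEigenspace T mu) : B v w = 0 := by
  rw [Module.End.mem_maxGenEigenspace] at hv hw
  obtain ⟨m, hm⟩ := hv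
  obtain ⟨n, hn⟩ := hw
  exact aux_orth B T hT lam mu h (m + n) m n le_rfl v w hm hn

theorem stmt2 {F V : Type*} [Field F] [IsAlgClosed F] [CharZero F]
    [AddCommGroup V] [Module F V] [FiniteDimensional F V]
    (B : LinearMap.BilinForm F V) (hB : B.Nondegenerate) (hBsa : B.IsSymm ∨ B.IsAlt)
    (T : V →ₗ[F] V) (hT : ∀ v w, B (T v) (T w) = B v w)
    (lam : F) (hlam : lam ≠ 0) :
    (∀ v ∈ Module.End.maxGenEigenspace T lam,
        (∀ w ∈ Module.End.maxGenEigenspace T lam⁻¹, B v w = 0) → v = 0) ∧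
    (∀ w ∈ Module.End.maxGenEigenspace T lam⁻¹,
        (∀ v ∈ Module.End.maxGenEigenspace T lam, B v w = 0) → w = 0) ∧
    Module.finrank F (Module.End.maxGenEigenspace T lam) =
      Module.finrank F (Module.End.maxGenEigenspace T lam⁻¹) := by
  have hsymm : ∀ v w : V, B v w = 0 → B w v = 0 := by
    rcases hBsa with hs | ha
    · intro v w h; rw [← hs.eq v w, h]
    · intro v w h
      have := ha.neg_eq v w
      rw [h] at this; simpa using this.symm
  -- left nondegeneracy for a general pair (lam, mu) with lam * mu = 1
  have main : ∀ (a b : F), a * b = 1 →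
      ∀ v ∈ Module.End.maxGenEigenspace T a,
        (∀ w ∈ Module.End.maxGenEigenspace T b, B v w = 0) → v = 0 := by
    intro a b hab v hv hv0
    apply hB.1 v
    intro w
    have htop : w ∈ ⨆ μ : F, Module.End.maxGenEigenspace T μ := by
      rw [Module.End.iSup_maxGenEigenspace_eq_top T]; trivial
    induction htop using Submodule.iSup_induction' with
    | mem μ x hx =>
      by_cases hμ : μ = b
      · exact hv0 x (hμ ▸ hx)
      · refine aux_orth' B T hT a μ ?_ v x hv hx
        intro hc
        apply hμ
        have ha : a ≠ 0 := by rintro rfl; simp at hab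
        exact mul_left_cancel₀ ha (hc.trans hab.symm)
    | zero => simp
    | add x y _ _ hx hy => rw [map_add, hx, hy, add_zero]
  have hinv : lam⁻¹ * lam = 1 := inv_mul_cancel₀ hlam
  have left := main lam lam⁻¹ (mul_inv_cancel₀ hlam)
  have right' := main lam⁻¹ lam hinv
  refine ⟨left, ?_, ?_⟩
  · intro w hw hw0
    exact right' w hw (fun v hv => hsymm v w (hw0 v hv))
  · -- dimension count via injections into duals
    have dimle : ∀ (a b : F),
        (∀ v ∈ Module.End.maxGenEigenspace T a,
          (∀ w ∈ Module.End.maxGenEigenspace T b, B v w = 0) → v = 0) →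
        Module.finrank F (Module.End.maxGenEigenspace T a) ≤
          Module.finrank F (Module.End.maxGenEigenspace T b) := by
      intro a b hnd
      set p := Module.End.maxGenEigenspace T a
      set q := Module.End.maxGenEigenspace T b
      let f : p →ₗ[F] Module.Dual F q :=
        { toFun := fun v => (B v.1).comp q.subtype
          map_add' := by intro x y; ext w; simp
          map_smul' := by intro c x; ext w; simp }
      have hf : Function.Injective f := by
        rw [← LinearMap.ker_eq_bot, eq_bot_iff]
        rintro ⟨v, hv⟩ hker
        have : ∀ w ∈ q, B v w = 0 := by
          intro w hw
          have := congrFun (congrArg DFunLike.coe hker) ⟨w, hw⟩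
          simpa [f] using this
        have := hnd v hv this
        exact (Submodule.mem_bot F).mpr (Subtype.ext this)
      calc Module.finrank F p ≤ Module.finrank F (Module.Dual F q) :=
            LinearMap.finrank_le_finrank_of_injective hf
        _ = Module.finrank F q := Subspace.dual_finrank_eq
    have h1 := dimle lam lam⁻¹ left
    have h2 := dimle lam⁻¹ lam right'
    omega
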